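/- If u and v are true twins in a simple graph G (N_G[u] = N_G[v]), then u and v remain true twins in every minimal trivially perfect completion of G. -/

import Mathlib

open scoped Classical

def IsClusterGraph {W : Type*} (H : SimpleGraph W) : Prop :=
  ∀ ⦃u v w : W⦄, H.Adj u v → H.Adj v w → u ≠ w → H.Adj u w

def closedNbhd {W : Type*} (G : SimpleGraph W) (v : W) : Set W :=
  insert v (G.neighborSet v)

noncomputable def cut {W : Type*} (G : SimpleGraph W) (U : Set W) : ℕ :=
  {e ∈ G.edgeSet | ∃ a ∈ U, ∃ b ∉ U, e = s(a, b)}.ncard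

noncomputable def clusterDelNum {W : Type*} (G : SimpleGraph W) : ℕ :=
  sInf {n | ∃ E ⊆ G.edgeSet, E.ncard = n ∧ IsClusterGraph (G.deleteEdges E)}

def IsSTCSolution {W : Type*} (G : SimpleGraph W) (E : Set (Sym2 W)) : Prop :=
  E ⊆ G.edgeSet ∧
    ∀ ⦃u w x : W⦄, (G.deleteEdges E).Adj u w → (G.deleteEdges E).Adj w x → u ≠ x →
      ¬(G.deleteEdges E).Adj u x → G.Adj u x

noncomputable def stcNum {W : Type*} (G : SimpleGraph W) : ℕ :=
  sInf {n | ∃ E : Set (Sym2 W), IsSTCSolution G E ∧ E.ncard = n}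

def P4At {W : Type*} (H : SimpleGraph W) (a b c d : W) : Prop :=
  a ≠ b ∧ a ≠ c ∧ a ≠ d ∧ b ≠ c ∧ b ≠ d ∧ c ≠ d ∧
    H.Adj a b ∧ H.Adj b c ∧ H.Adj c d ∧ ¬H.Adj a c ∧ ¬H.Adj b d ∧ ¬H.Adj a d

def C4At {W : Type*} (H : SimpleGraph W) (a b c d : W) : Prop :=
  a ≠ b ∧ a ≠ c ∧ a ≠ d ∧ b ≠ c ∧ b ≠ d ∧ c ≠ d ∧
    H.Adj a b ∧ H.Adj b c ∧ H.Adj c d ∧ H.Adj d a ∧ ¬H.Adj a c ∧ ¬H.Adj b d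

def TwoK2At {W : Type*} (H : SimpleGraph W) (a b c d : W) : Prop :=
  a ≠ b ∧ a ≠ c ∧ a ≠ d ∧ b ≠ c ∧ b ≠ d ∧ c ≠ d ∧
    H.Adj a b ∧ H.Adj c d ∧ ¬H.Adj a c ∧ ¬H.Adj a d ∧ ¬H.Adj b c ∧ ¬H.Adj b d

def C5At {W : Type*} (H : SimpleGraph W) (a b c d e : W) : Prop :=
  a ≠ b ∧ a ≠ c ∧ a ≠ d ∧ a ≠ e ∧ b ≠ c ∧ b ≠ d ∧ b ≠ e ∧ c ≠ d ∧ c ≠ e ∧ d ≠ e ∧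
    H.Adj a b ∧ H.Adj b c ∧ H.Adj c d ∧ H.Adj d e ∧ H.Adj e a ∧
    ¬H.Adj a c ∧ ¬H.Adj a d ∧ ¬H.Adj b d ∧ ¬H.Adj b e ∧ ¬H.Adj c e

def IsTriviallyPerfect {W : Type*} (H : SimpleGraph W) : Prop :=
  (¬∃ a b c d, P4At H a b c d) ∧ (¬∃ a b c d, C4At H a b c d)

def IsIndep {W : Type*} (H : SimpleGraph W) (s : Set W) : Prop :=
  s.Pairwise fun a b => ¬H.Adj a b

def IsSplit {W : Type*} (H : SimpleGraph W) : Prop :=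
  ∃ C : Set W, H.IsClique C ∧ IsIndep H Cᶜ

def IsPseudoSplit {W : Type*} (H : SimpleGraph W) : Prop :=
  (¬∃ a b c d, TwoK2At H a b c d) ∧ (¬∃ a b c d, C4At H a b c d)

noncomputable def sedNum {W : Type*} (G : SimpleGraph W) : ℕ :=
  sInf {n | ∃ E ⊆ G.edgeSet, E.ncard = n ∧ IsSplit (G.deleteEdges E)}

noncomputable def psdNum {W : Type*} (G : SimpleGraph W) : ℕ :=
  sInf {n | ∃ E ⊆ G.edgeSet, E.ncard = n ∧ IsPseudoSplit (G.deleteEdges E)}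

def IsTPCompletion {W : Type*} (G Gh : SimpleGraph W) : Prop :=
  G ≤ Gh ∧ IsTriviallyPerfect Gh

def IsMinimalTPCompletion {W : Type*} (G Gh : SimpleGraph W) : Prop :=
  IsTPCompletion G Gh ∧
    ∀ G' : SimpleGraph W, G ≤ G' → G' ≤ Gh → IsTriviallyPerfect G' → G' = Gh

noncomputable def tpcNum {W : Type*} (G : SimpleGraph W) : ℕ :=
  sInf {n | ∃ Gh : SimpleGraph W, IsTPCompletion G Gh ∧ (Gh.edgeSet \ G.edgeSet).ncard = n}

def IsMinTPCompletion {W : Type*} (G Gh : SimpleGraph W) : Prop :=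
  IsTPCompletion G Gh ∧
    ∀ G' : SimpleGraph W, IsTPCompletion G G' →
      (Gh.edgeSet \ G.edgeSet).ncard ≤ (G'.edgeSet \ G.edgeSet).ncard

def IsModule {W : Type*} (G : SimpleGraph W) (M : Set W) : Prop :=
  ∀ a ∈ M, ∀ b ∈ M, ∀ x ∉ M, (G.Adj a x ↔ G.Adj b x)

section TwinAux

variable {V : Type*}

lemma P4At.rev {H : SimpleGraph V} {a b c d : V} (h : P4At H a b c d) : P4At H d c b a := by
  obtain ⟨h1, h2, h3, h4, h5, h6, e1, e2, e3, n1, n2, n3⟩ := h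
  exact ⟨h6.symm, h5.symm, h3.symm, h4.symm, h2.symm, h1.symm, e3.symm, e2.symm, e1.symm,
    fun h => n2 h.symm, fun h => n1 h.symm, fun h => n3 h.symm⟩

lemma C4At.rot {H : SimpleGraph V} {a b c d : V} (h : C4At H a b c d) : C4At H b c d a := by
  obtain ⟨h1, h2, h3, h4, h5, h6, e1, e2, e3, e4, n1, n2⟩ := h
  exact ⟨h4, h5, h1.symm, h6, h2.symm, h3.symm, e2, e3, e4, e1, n2, fun h => n1 h.symm⟩

lemma noBothP4 {H : SimpleGraph V} {u v a b c d : V} (hA : H.Adj u v)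
    (htw : ∀ x, x ≠ u → x ≠ v → (H.Adj u x ↔ H.Adj v x))
    (hp : P4At H a b c d) (hu : u = a ∨ u = b ∨ u = c ∨ u = d)
    (hv : v = a ∨ v = b ∨ v = c ∨ v = d) : False := by
  obtain ⟨nab, nac, nad, nbc, nbd, ncd, Aab, Abc, Acd, Nac, Nbd, Nad⟩ := hp
  rcases hu with rfl | rfl | rfl | rfl <;> rcases hv with rfl | rfl | rfl | rfl
  · exact hA.ne rfl
  · exact Nac ((htw c nac.symm nbc.symm).mpr Abc)
  · exact Nac hA
  · exact Nad hA
  · exact Nac ((htw c nbc.symm nac.symm).mp Abc)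
  · exact hA.ne rfl
  · exact Nac ((htw a nab nac).mp Aab.symm).symm
  · exact Nbd hA
  · exact Nac hA.symm
  · exact Nac ((htw a nac nab).mpr Aab.symm).symm
  · exact hA.ne rfl
  · exact Nbd ((htw b nbc nbd).mp Abc.symm).symm
  · exact Nad hA.symm
  · exact Nbd hA.symm
  · exact Nbd ((htw b nbd nbc).mpr Abc.symm).symm
  · exact hA.ne rfl

lemma noBothC4 {H : SimpleGraph V} {u v a b c d : V} (hA : H.Adj u v)
    (htw : ∀ x, x ≠ u → x ≠ v → (H.Adj u x ↔ H.Adj v x))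
    (hp : C4At H a b c d) (hu : u = a ∨ u = b ∨ u = c ∨ u = d)
    (hv : v = a ∨ v = b ∨ v = c ∨ v = d) : False := by
  obtain ⟨nab, nac, nad, nbc, nbd, ncd, Aab, Abc, Acd, Ada, Nac, Nbd⟩ := hp
  rcases hu with rfl | rfl | rfl | rfl <;> rcases hv with rfl | rfl | rfl | rfl
  · exact hA.ne rfl
  · exact Nac ((htw c nac.symm nbc.symm).mpr Abc)
  · exact Nac hA
  · exact Nbd ((htw b nab.symm nbd).mp Aab).symm
  · exact Nac ((htw c nbc.symm nac.symm).mp Abc)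
  · exact hA.ne rfl
  · exact Nbd ((htw d nbd.symm ncd.symm).mpr Acd)
  · exact Nbd hA
  · exact Nac hA.symm
  · exact Nbd ((htw d ncd.symm nbd.symm).mp Acd)
  · exact hA.ne rfl
  · exact Nac ((htw a nac nad).mpr Ada).symm
  · exact Nbd ((htw b nbd nab.symm).mpr Aab).symm
  · exact Nbd hA.symm
  · exact Nac ((htw a nad nac).mp Ada).symm
  · exact hA.ne rfl

lemma noP4a {H Gh : SimpleGraph V} {u v : V}
    (hTP : IsTriviallyPerfect Gh) (huv : u ≠ v) (hGuv : Gh.Adj u v)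
    (h1 : ∀ y, y ≠ u → H.Adj v y → Gh.Adj v y ∧ Gh.Adj u y)
    (h2 : ∀ z, z ≠ u → z ≠ v → ¬H.Adj v z → ¬Gh.Adj v z ∨ ¬Gh.Adj u z)
    (h3 : ∀ y z, y ≠ u → y ≠ v → z ≠ u → z ≠ v → (H.Adj y z ↔ Gh.Adj y z))
    {b c d : V} (hb : b ≠ u) (hc : c ≠ u) (hd : d ≠ u) :
    ¬ P4At H v b c d := by
  rintro ⟨hvb, hvc, hvd, hbc, hbd, hcd, Avb, Abc, Acd, nvc, nbd, nvd⟩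
  obtain ⟨Gvb, Gub⟩ := h1 b hb Avb
  have Gbc : Gh.Adj b c := (h3 b c hb hvb.symm hc hvc.symm).mp Abc
  have Gcd : Gh.Adj c d := (h3 c d hc hvc.symm hd hvd.symm).mp Acd
  have nGbd : ¬Gh.Adj b d := fun h => nbd ((h3 b d hb hvb.symm hd hvd.symm).mpr h)
  by_cases hGvc : Gh.Adj v c
  · have nGuc : ¬Gh.Adj u c := (h2 c hc hvc.symm nvc).resolve_left (not_not_intro hGvc)
    by_cases hGud : Gh.Adj u d
    · have nGvd : ¬Gh.Adj v d := (h2 d hd hvd.symm nvd).resolve_right (not_not_intro hGud)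
      exact hTP.2 ⟨d, u, v, c, hd, hvd.symm, hcd.symm, huv, hc.symm, hvc,
        hGud.symm, hGuv, hGvc, Gcd, fun h => nGvd h.symm, nGuc⟩
    · exact hTP.1 ⟨u, b, c, d, hb.symm, hc.symm, hd.symm, hbc, hbd, hcd,
        Gub, Gbc, Gcd, nGuc, nGbd, hGud⟩
  · by_cases hGvd : Gh.Adj v d
    · exact hTP.2 ⟨v, b, c, d, hvb, hvc, hvd, hbc, hbd, hcd,
        Gvb, Gbc, Gcd, hGvd.symm, hGvc, nGbd⟩
    · exact hTP.1 ⟨v, b, c, d, hvb, hvc, hvd, hbc, hbd, hcd,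
        Gvb, Gbc, Gcd, hGvc, nGbd, hGvd⟩

lemma noP4b {H Gh : SimpleGraph V} {u v : V}
    (hTP : IsTriviallyPerfect Gh) (huv : u ≠ v) (hGuv : Gh.Adj u v)
    (h1 : ∀ y, y ≠ u → H.Adj v y → Gh.Adj v y ∧ Gh.Adj u y)
    (h2 : ∀ z, z ≠ u → z ≠ v → ¬H.Adj v z → ¬Gh.Adj v z ∨ ¬Gh.Adj u z)
    (h3 : ∀ y z, y ≠ u → y ≠ v → z ≠ u → z ≠ v → (H.Adj y z ↔ Gh.Adj y z))
    {a c d : V} (ha : a ≠ u) (hc : c ≠ u) (hd : d ≠ u) :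
    ¬ P4At H a v c d := by
  rintro ⟨hav, hac, had, hvc, hvd, hcd, Aav, Avc, Acd, nac, nvd, nad⟩
  obtain ⟨Gva, Gua⟩ := h1 a ha Aav.symm
  obtain ⟨Gvc, Guc⟩ := h1 c hc Avc
  have Gcd : Gh.Adj c d := (h3 c d hc hvc.symm hd hvd.symm).mp Acd
  have nGac : ¬Gh.Adj a c := fun h => nac ((h3 a c ha hav hc hvc.symm).mpr h)
  have nGad : ¬Gh.Adj a d := fun h => nad ((h3 a d ha hav hd hvd.symm).mpr h)
  by_cases hGvd : Gh.Adj v d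
  · have nGud : ¬Gh.Adj u d := (h2 d hd hvd.symm nvd).resolve_left (not_not_intro hGvd)
    exact hTP.1 ⟨a, u, c, d, ha, hac, had, hc.symm, hd.symm, hcd,
      Gua.symm, Guc, Gcd, nGac, nGud, nGad⟩
  · exact hTP.1 ⟨a, v, c, d, hav, hac, had, hvc, hvd, hcd,
      Gva.symm, Gvc, Gcd, nGac, hGvd, nGad⟩

lemma noC4a {H Gh : SimpleGraph V} {u v : V}
    (hTP : IsTriviallyPerfect Gh) (huv : u ≠ v) (hGuv : Gh.Adj u v)
    (h1 : ∀ y, y ≠ u → H.Adj v y → Gh.Adj v y ∧ Gh.Adj u y)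
    (h2 : ∀ z, z ≠ u → z ≠ v → ¬H.Adj v z → ¬Gh.Adj v z ∨ ¬Gh.Adj u z)
    (h3 : ∀ y z, y ≠ u → y ≠ v → z ≠ u → z ≠ v → (H.Adj y z ↔ Gh.Adj y z))
    {b c d : V} (hb : b ≠ u) (hc : c ≠ u) (hd : d ≠ u) :
    ¬ C4At H v b c d := by
  rintro ⟨hvb, hvc, hvd, hbc, hbd, hcd, Avb, Abc, Acd, Adv, nvc, nbd⟩
  obtain ⟨Gvb, Gub⟩ := h1 b hb Avb
  obtain ⟨Gvd, Gud⟩ := h1 d hd Adv.symm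
  have Gbc : Gh.Adj b c := (h3 b c hb hvb.symm hc hvc.symm).mp Abc
  have Gcd : Gh.Adj c d := (h3 c d hc hvc.symm hd hvd.symm).mp Acd
  have nGbd : ¬Gh.Adj b d := fun h => nbd ((h3 b d hb hvb.symm hd hvd.symm).mpr h)
  by_cases hGvc : Gh.Adj v c
  · have nGuc : ¬Gh.Adj u c := (h2 c hc hvc.symm nvc).resolve_left (not_not_intro hGvc)
    exact hTP.2 ⟨u, b, c, d, hb.symm, hc.symm, hd.symm, hbc, hbd, hcd,
      Gub, Gbc, Gcd, Gud.symm, nGuc, nGbd⟩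
  · exact hTP.2 ⟨v, b, c, d, hvb, hvc, hvd, hbc, hbd, hcd,
      Gvb, Gbc, Gcd, Gvd.symm, hGvc, nGbd⟩

lemma swapInf_TP (Gh : SimpleGraph V) (u v : V) (huv : u ≠ v) (hGuv : Gh.Adj u v)
    (hTP : IsTriviallyPerfect Gh) :
    IsTriviallyPerfect (Gh ⊓ Gh.comap (Equiv.swap u v)) := by
  set H := Gh ⊓ Gh.comap ⇑(Equiv.swap u v) with hHdef
  have hHA : ∀ x y, H.Adj x y ↔ Gh.Adj x y ∧ Gh.Adj (Equiv.swap u v x) (Equiv.swap u v y) := by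
    intro x y
    simp [hHdef, SimpleGraph.inf_adj, SimpleGraph.comap_adj]
  have hHuv : H.Adj u v := by
    rw [hHA, Equiv.swap_apply_left, Equiv.swap_apply_right]
    exact ⟨hGuv, hGuv.symm⟩
  have h3 : ∀ y z, y ≠ u → y ≠ v → z ≠ u → z ≠ v → (H.Adj y z ↔ Gh.Adj y z) := by
    intro y z h1 h2 h4 h5
    rw [hHA, Equiv.swap_apply_of_ne_of_ne h1 h2, Equiv.swap_apply_of_ne_of_ne h4 h5, and_self]
  have h1v : ∀ y, y ≠ u → H.Adj v y → Gh.Adj v y ∧ Gh.Adj u y := by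
    intro y hy h
    rw [hHA] at h
    obtain ⟨ha, hb⟩ := h
    by_cases hyv : y = v
    · exact absurd ha (by rw [hyv]; exact Gh.loopless.irrefl v)
    · rw [Equiv.swap_apply_right, Equiv.swap_apply_of_ne_of_ne hy hyv] at hb
      exact ⟨ha, hb⟩
  have h2v : ∀ z, z ≠ u → z ≠ v → ¬H.Adj v z → ¬Gh.Adj v z ∨ ¬Gh.Adj u z := by
    intro z hzu hzv h
    by_contra hcon
    push_neg at hcon
    exact h ((hHA v z).mpr ⟨hcon.1, by
      rw [Equiv.swap_apply_right, Equiv.swap_apply_of_ne_of_ne hzu hzv]; exact hcon.2⟩)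
  have h1u : ∀ y, y ≠ v → H.Adj u y → Gh.Adj u y ∧ Gh.Adj v y := by
    intro y hy h
    rw [hHA] at h
    obtain ⟨ha, hb⟩ := h
    by_cases hyu : y = u
    · exact absurd ha (by rw [hyu]; exact Gh.loopless.irrefl u)
    · rw [Equiv.swap_apply_left, Equiv.swap_apply_of_ne_of_ne hyu hy] at hb
      exact ⟨ha, hb⟩
  have h2u : ∀ z, z ≠ v → z ≠ u → ¬H.Adj u z → ¬Gh.Adj u z ∨ ¬Gh.Adj v z := by
    intro z hzv hzu h
    by_contra hcon
    push_neg at hcon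
    exact h ((hHA u z).mpr ⟨hcon.1, by
      rw [Equiv.swap_apply_left, Equiv.swap_apply_of_ne_of_ne hzu hzv]; exact hcon.2⟩)
  have h3' : ∀ y z, y ≠ v → y ≠ u → z ≠ v → z ≠ u → (H.Adj y z ↔ Gh.Adj y z) :=
    fun y z a b c' d' => h3 y z b a d' c'
  have htwH : ∀ x, x ≠ u → x ≠ v → (H.Adj u x ↔ H.Adj v x) := by
    intro x hxu hxv
    rw [hHA, hHA, Equiv.swap_apply_left, Equiv.swap_apply_right,
      Equiv.swap_apply_of_ne_of_ne hxu hxv]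
    exact and_comm
  constructor
  · rintro ⟨a, b, c, d, hp⟩
    by_cases hu : u = a ∨ u = b ∨ u = c ∨ u = d
    · by_cases hv : v = a ∨ v = b ∨ v = c ∨ v = d
      · exact noBothP4 hHuv htwH hp hu hv
      · push_neg at hv
        obtain ⟨hva, hvb, hvc, hvd⟩ := hv
        rcases hu with rfl | rfl | rfl | rfl
        · exact noP4a hTP huv.symm hGuv.symm h1u h2u h3' hvb.symm hvc.symm hvd.symm hp
        · exact noP4b hTP huv.symm hGuv.symm h1u h2u h3' hva.symm hvc.symm hvd.symm hp
        · exact noP4b hTP huv.symm hGuv.symm h1u h2u h3' hvd.symm hvb.symm hva.symm hp.rev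
        · exact noP4a hTP huv.symm hGuv.symm h1u h2u h3' hvc.symm hvb.symm hva.symm hp.rev
    · push_neg at hu
      obtain ⟨hua, hub, huc, hud⟩ := hu
      by_cases hv : v = a ∨ v = b ∨ v = c ∨ v = d
      · rcases hv with rfl | rfl | rfl | rfl
        · exact noP4a hTP huv hGuv h1v h2v h3 hub.symm huc.symm hud.symm hp
        · exact noP4b hTP huv hGuv h1v h2v h3 hua.symm huc.symm hud.symm hp
        · exact noP4b hTP huv hGuv h1v h2v h3 hud.symm hub.symm hua.symm hp.rev
        · exact noP4a hTP huv hGuv h1v h2v h3 huc.symm hub.symm hua.symm hp.rev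
      · push_neg at hv
        obtain ⟨hva, hvb, hvc, hvd⟩ := hv
        obtain ⟨n1, n2, n3, n4, n5, n6, e1, e2, e3, m1, m2, m3⟩ := hp
        exact hTP.1 ⟨a, b, c, d, n1, n2, n3, n4, n5, n6,
          (h3 a b hua.symm hva.symm hub.symm hvb.symm).mp e1,
          (h3 b c hub.symm hvb.symm huc.symm hvc.symm).mp e2,
          (h3 c d huc.symm hvc.symm hud.symm hvd.symm).mp e3,
          fun h => m1 ((h3 a c hua.symm hva.symm huc.symm hvc.symm).mpr h),
          fun h => m2 ((h3 b d hub.symm hvb.symm hud.symm hvd.symm).mpr h),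
          fun h => m3 ((h3 a d hua.symm hva.symm hud.symm hvd.symm).mpr h)⟩
  · rintro ⟨a, b, c, d, hp⟩
    by_cases hu : u = a ∨ u = b ∨ u = c ∨ u = d
    · by_cases hv : v = a ∨ v = b ∨ v = c ∨ v = d
      · exact noBothC4 hHuv htwH hp hu hv
      · push_neg at hv
        obtain ⟨hva, hvb, hvc, hvd⟩ := hv
        rcases hu with rfl | rfl | rfl | rfl
        · exact noC4a hTP huv.symm hGuv.symm h1u h2u h3' hvb.symm hvc.symm hvd.symm hp
        · exact noC4a hTP huv.symm hGuv.symm h1u h2u h3' hvc.symm hvd.symm hva.symm hp.rot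
        · exact noC4a hTP huv.symm hGuv.symm h1u h2u h3' hvd.symm hva.symm hvb.symm hp.rot.rot
        · exact noC4a hTP huv.symm hGuv.symm h1u h2u h3' hva.symm hvb.symm hvc.symm hp.rot.rot.rot
    · push_neg at hu
      obtain ⟨hua, hub, huc, hud⟩ := hu
      by_cases hv : v = a ∨ v = b ∨ v = c ∨ v = d
      · rcases hv with rfl | rfl | rfl | rfl
        · exact noC4a hTP huv hGuv h1v h2v h3 hub.symm huc.symm hud.symm hp
        · exact noC4a hTP huv hGuv h1v h2v h3 huc.symm hud.symm hua.symm hp.rot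
        · exact noC4a hTP huv hGuv h1v h2v h3 hud.symm hua.symm hub.symm hp.rot.rot
        · exact noC4a hTP huv hGuv h1v h2v h3 hua.symm hub.symm huc.symm hp.rot.rot.rot
      · push_neg at hv
        obtain ⟨hva, hvb, hvc, hvd⟩ := hv
        obtain ⟨n1, n2, n3, n4, n5, n6, e1, e2, e3, e4, m1, m2⟩ := hp
        exact hTP.2 ⟨a, b, c, d, n1, n2, n3, n4, n5, n6,
          (h3 a b hua.symm hva.symm hub.symm hvb.symm).mp e1,
          (h3 b c hub.symm hvb.symm huc.symm hvc.symm).mp e2,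
          (h3 c d huc.symm hvc.symm hud.symm hvd.symm).mp e3,
          (h3 d a hud.symm hvd.symm hua.symm hva.symm).mp e4,
          fun h => m1 ((h3 a c hua.symm hva.symm huc.symm hvc.symm).mpr h),
          fun h => m2 ((h3 b d hub.symm hvb.symm hud.symm hvd.symm).mpr h)⟩

end TwinAux
theorem stmt9 {V : Type*} (G Gh : SimpleGraph V)
    (hmin : IsMinimalTPCompletion G Gh) (u v : V)
    (htwin : closedNbhd G u = closedNbhd G v) :
    closedNbhd Gh u = closedNbhd Gh v := by
  by_cases huv : u = v
  · rw [huv]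
  · have hmem : ∀ x, (x = u ∨ G.Adj u x) ↔ (x = v ∨ G.Adj v x) := by
      intro x
      have h := Set.ext_iff.mp htwin x
      simpa [closedNbhd, Set.mem_insert_iff, SimpleGraph.mem_neighborSet] using h
    have hGuv : G.Adj u v := by
      rcases (hmem u).mp (Or.inl rfl) with h | h
      · exact absurd h huv
      · exact h.symm
    have htw : ∀ x, x ≠ u → x ≠ v → (G.Adj u x ↔ G.Adj v x) := by
      intro x hxu hxv
      have h := hmem x
      simpa [hxu, hxv] using h
    have hGsym : ∀ ⦃x y⦄, G.Adj x y → G.Adj (Equiv.swap u v x) (Equiv.swap u v y) := by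
      intro x y h
      rcases eq_or_ne x u with rfl | hxu
      · rw [Equiv.swap_apply_left]
        rcases eq_or_ne y v with rfl | hyv
        · rw [Equiv.swap_apply_right]; exact hGuv.symm
        · have hyu : y ≠ x := h.ne'
          rw [Equiv.swap_apply_of_ne_of_ne hyu hyv]
          exact (htw y hyu hyv).mp h
      · rcases eq_or_ne x v with rfl | hxv
        · rw [Equiv.swap_apply_right]
          rcases eq_or_ne y u with rfl | hyu
          · rw [Equiv.swap_apply_left]; exact hGuv
          · have hyv : y ≠ x := h.ne'
            rw [Equiv.swap_apply_of_ne_of_ne hyu hyv]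
            exact (htw y hyu hyv).mpr h
        · rw [Equiv.swap_apply_of_ne_of_ne hxu hxv]
          rcases eq_or_ne y u with rfl | hyu
          · rw [Equiv.swap_apply_left]
            exact ((htw x hxu hxv).mp h.symm).symm
          · rcases eq_or_ne y v with rfl | hyv
            · rw [Equiv.swap_apply_right]
              exact ((htw x hxu hxv).mpr h.symm).symm
            · rw [Equiv.swap_apply_of_ne_of_ne hyu hyv]; exact h
    have hGhuv : Gh.Adj u v := hmin.1.1 hGuv
    have hle1 : G ≤ Gh ⊓ Gh.comap ⇑(Equiv.swap u v) := by
      intro x y h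
      exact ⟨hmin.1.1 h, hmin.1.1 (hGsym h)⟩
    have hTPH := swapInf_TP Gh u v huv hGhuv hmin.1.2
    have hEq : Gh ⊓ Gh.comap ⇑(Equiv.swap u v) = Gh :=
      hmin.2 _ hle1 inf_le_left hTPH
    have hsym : ∀ ⦃x y⦄, Gh.Adj x y → Gh.Adj (Equiv.swap u v x) (Equiv.swap u v y) := by
      intro x y h
      rw [← hEq] at h
      exact h.2
    ext x
    simp only [closedNbhd, Set.mem_insert_iff, SimpleGraph.mem_neighborSet]
    constructor
    · rintro (rfl | h)
      · exact Or.inr hGhuv.symm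
      · rcases eq_or_ne x v with rfl | hxv
        · exact Or.inl rfl
        · have h2 := hsym h
          rw [Equiv.swap_apply_left, Equiv.swap_apply_of_ne_of_ne h.ne' hxv] at h2
          exact Or.inr h2
    · rintro (rfl | h)
      · exact Or.inr hGhuv
      · rcases eq_or_ne x u with rfl | hxu
        · exact Or.inl rfl
        · have h2 := hsym h
          rw [Equiv.swap_apply_right, Equiv.swap_apply_of_ne_of_ne hxu h.ne'] at h2
          exact Or.inr h2
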